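/- Let T_1, ..., T_n be independent random variables, T_i having survival function exp(-ρ_i Λ_0(t)) with ρ_i > 0 and Λ_0 a fixed continuous strictly increasing cumulative hazard with Λ_0(0)=0 and Λ_0(∞)=∞. Then the probability that the ordering of T_1,...,T_n equals a given permutation σ (i.e., T_{σ(1)} < T_{σ(2)} < ... < T_{σ(n)}) is ∏_{k=1}^n ρ_{σ(k)} / (ρ_{σ(k)} + ρ_{σ(k+1)} + ... + ρ_{σ(n)}), which does not depend on Λ_0. -/

import Mathlib

open MeasureTheory ProbabilityTheory Real Set
open scoped ENNReal

noncomputable def eM (a : ℝ) : Measure ℝ :=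
  (volume.restrict (Set.Ioi 0)).withDensity fun u => ENNReal.ofReal (a * Real.exp (-(a * u)))

lemma integral_exp_neg_mul_Ioi {a : ℝ} (ha : 0 < a) (t : ℝ) :
    ∫ s in Set.Ioi t, Real.exp (-(a * s)) = Real.exp (-(a * t)) / a := by
  have hderiv : ∀ x ∈ Set.Ici t,
      HasDerivAt (fun s => -Real.exp (-(a * s)) / a) (Real.exp (-(a * x))) x := by
    intro x _
    have h1 : HasDerivAt (fun s : ℝ => -(a * s)) (-a) x := by
      simpa using ((hasDerivAt_id x).const_mul (-a))
    have h2 := (h1.exp).neg.div_const a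
    exact h2.congr_deriv (by rw [div_eq_iff ha.ne']; ring)
  have hint : IntegrableOn (fun s => Real.exp (-(a * s))) (Set.Ioi t) := by
    simpa [neg_mul] using exp_neg_integrableOn_Ioi t ha
  have htend : Filter.Tendsto (fun s => -Real.exp (-(a * s)) / a) Filter.atTop (nhds 0) := by
    have : Filter.Tendsto (fun s : ℝ => -(a * s)) Filter.atTop Filter.atBot :=
      Filter.tendsto_neg_atBot_iff.mpr (Filter.Tendsto.const_mul_atTop ha Filter.tendsto_id)
    have := (Real.tendsto_exp_atBot.comp this).neg.div_const a
    simpa using this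
  have := integral_Ioi_of_hasDerivAt_of_tendsto' hderiv hint htend
  rw [this]; ring

lemma eM_lintegral_exp {a c C : ℝ} (ha : 0 < a) (hc : 0 ≤ c) (hC : 0 ≤ C) {t : ℝ} (ht : 0 ≤ t) :
    ∫⁻ s in Set.Ioi t, ENNReal.ofReal (Real.exp (-(c * s)) * C) ∂(eM a)
      = ENNReal.ofReal (a / (a + c) * Real.exp (-((a + c) * t)) * C) := by
  have hIoi : Set.Ioi t ∩ Set.Ioi (0:ℝ) = Set.Ioi t := by
    apply Set.inter_eq_left.mpr; exact fun x hx => lt_of_le_of_lt ht hx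
  have h1 : ∫⁻ s in Set.Ioi t, ENNReal.ofReal (Real.exp (-(c * s)) * C) ∂(eM a)
      = ∫⁻ s in Set.Ioi t,
          ENNReal.ofReal (a * Real.exp (-(a * s))) * ENNReal.ofReal (Real.exp (-(c * s)) * C) := by
    rw [eM, restrict_withDensity measurableSet_Ioi,
      lintegral_withDensity_eq_lintegral_mul _ (by fun_prop) (by fun_prop),
      Measure.restrict_restrict measurableSet_Ioi, hIoi]
    rfl
  rw [h1]
  have h2 : ∀ s : ℝ, ENNReal.ofReal (a * Real.exp (-(a * s))) * ENNReal.ofReal (Real.exp (-(c * s)) * C)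
      = ENNReal.ofReal ((a * C) * Real.exp (-((a + c) * s))) := by
    intro s
    rw [← ENNReal.ofReal_mul (by positivity)]
    congr 1
    rw [show -((a+c)*s) = -(a*s) + -(c*s) by ring, Real.exp_add]
    ring
  simp_rw [h2]
  have hac : (0:ℝ) < a + c := by linarith
  have base : IntegrableOn (fun s => Real.exp (-((a + c) * s))) (Set.Ioi t) := by
    have h := exp_neg_integrableOn_Ioi t hac
    have : (fun s : ℝ => Real.exp (-(a+c) * s)) = fun s => Real.exp (-((a + c) * s)) := by
      funext s; rw [neg_mul]
    rwa [this] at h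
  have hint : IntegrableOn (fun s => (a * C) * Real.exp (-((a + c) * s))) (Set.Ioi t) :=
    base.const_mul _
  rw [← ofReal_integral_eq_lintegral_ofReal hint (Filter.Eventually.of_forall fun s => by positivity)]
  rw [integral_const_mul, integral_exp_neg_mul_Ioi hac t]
  congr 1
  field_simp

lemma eM_apply_Ioi {a : ℝ} (ha : 0 < a) {t : ℝ} (ht : 0 ≤ t) :
    eM a (Set.Ioi t) = ENNReal.ofReal (Real.exp (-(a * t))) := by
  have := eM_lintegral_exp (c := 0) (C := 1) ha le_rfl zero_le_one ht
  simpa [div_self ha.ne'] using this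

instance eM_sf (a : ℝ) : SigmaFinite (eM a) := by
  unfold eM; infer_instance

lemma eM_prob {a : ℝ} (ha : 0 < a) : IsProbabilityMeasure (eM a) := by
  constructor
  have h0 : eM a (Set.Iic 0) = 0 := by
    rw [eM, withDensity_apply _ measurableSet_Iic, Measure.restrict_restrict measurableSet_Iic]
    have : Set.Iic (0:ℝ) ∩ Set.Ioi 0 = ∅ := by
      ext x; simp only [Set.mem_inter_iff, Set.mem_Iic, Set.mem_Ioi, Set.mem_empty_iff_false, iff_false, not_and]
      intro h hh; linarith
    simp [this]
  have : (Set.univ : Set ℝ) = Set.Iic 0 ∪ Set.Ioi 0 := by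
    ext x; simp [le_or_gt]
  rw [this]
  rw [measure_union (by rw [Set.disjoint_left]; intro x hx hx2; simp at hx hx2; linarith) measurableSet_Ioi, h0,
    eM_apply_Ioi ha le_rfl]
  simp

lemma strictMono_fin_cons {m : ℕ} {s : ℝ} {y : Fin (m + 1) → ℝ} :
    StrictMono (Fin.cons s y : Fin (m + 2) → ℝ) ↔ s < y 0 ∧ StrictMono y := by
  constructor
  · intro h
    constructor
    · have h1 := h (Fin.succ_pos (0 : Fin (m + 1)))
      rw [Fin.cons_succ, Fin.cons_zero] at h1
      exact h1
    · have hy : y = (Fin.cons s y : Fin (m + 2) → ℝ) ∘ Fin.succ := by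
        funext i; simp
      rw [hy]
      exact h.comp Fin.strictMono_succ
  · rintro ⟨h0, hy⟩ i j hij
    induction j using Fin.cases with
    | zero => exact absurd hij (Fin.not_lt_zero i).elim
    | succ j =>
      induction i using Fin.cases with
      | zero =>
        simp only [Fin.cons_zero, Fin.cons_succ]
        exact lt_of_lt_of_le h0 (hy.monotone (Fin.zero_le j))
      | succ i =>
        simp only [Fin.cons_succ]
        exact hy (by simpa [Fin.succ_lt_succ_iff] using hij)

lemma measurableSet_strictMono (N : ℕ) :
    MeasurableSet {x : Fin N → ℝ | StrictMono x} := by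
  have h : {x : Fin N → ℝ | StrictMono x}
      = ⋂ i, ⋂ j, ⋂ (_ : i < j), {x : Fin N → ℝ | x i < x j} := by
    ext x
    simp only [Set.mem_setOf_eq, Set.mem_iInter]
    exact ⟨fun h i j hij => h hij, fun h i j hij => h i j hij⟩
  rw [h]
  exact MeasurableSet.iInter fun i => MeasurableSet.iInter fun j => MeasurableSet.iInter fun _ =>
    measurableSet_lt (measurable_pi_apply i) (measurable_pi_apply j)

lemma sum_Ici_succ {m : ℕ} (r : Fin (m + 2) → ℝ) (k : Fin (m + 1)) :
    ∑ j ∈ Finset.Ici (Fin.succ k), r j = ∑ j ∈ Finset.Ici k, r (Fin.succ j) := by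
  rw [show Finset.Ici (Fin.succ k) = (Finset.Ici k).map ⟨Fin.succ, Fin.succ_injective _⟩ from ?_,
    Finset.sum_map]
  · rfl
  ext j
  simp only [Finset.mem_map, Finset.mem_Ici, Function.Embedding.coeFn_mk]
  constructor
  · intro hj
    induction j using Fin.cases with
    | zero => exact absurd hj (Fin.not_le.mpr (Fin.succ_pos k))
    | succ j => exact ⟨j, by simpa [Fin.succ_le_succ_iff] using hj, rfl⟩
  · rintro ⟨i, hi, rfl⟩
    simpa [Fin.succ_le_succ_iff] using hi

lemma key_lemma : ∀ (m : ℕ) (r : Fin (m+1) → ℝ), (∀ i, 0 < r i) → ∀ t : ℝ, 0 ≤ t →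
    Measure.pi (fun i => eM (r i)) {x | StrictMono x ∧ t < x 0} =
      ENNReal.ofReal (Real.exp (-((∑ j, r j) * t)) * ∏ k, r k / ∑ j ∈ Finset.Ici k, r j) := by
  intro m
  induction m with
  | zero =>
    intro r hr t ht
    have hset : {x : Fin 1 → ℝ | StrictMono x ∧ t < x 0}
        = Set.pi Set.univ (fun _ => Set.Ioi t) := by
      ext x
      simp only [Set.mem_setOf_eq, Set.mem_pi, Set.mem_univ, true_implies, Set.mem_Ioi]
      constructor
      · rintro ⟨-, h⟩ i
        rw [Fin.fin_one_eq_zero i]; exact h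
      · intro h; exact ⟨Subsingleton.strictMono x, h 0⟩
    rw [hset, Measure.pi_pi, Fin.prod_univ_one, eM_apply_Ioi (hr 0) ht]
    have hIci : ∑ j ∈ Finset.Ici (0 : Fin 1), r j = r 0 := by
      rw [show Finset.Ici (0 : Fin 1) = {0} by decide, Finset.sum_singleton]
    rw [Fin.sum_univ_one, Fin.prod_univ_one, hIci, div_self (hr 0).ne']
    rw [mul_one]
  | succ m IH =>
    intro r hr t ht
    haveI hPM : ∀ i : Fin (m+2), IsProbabilityMeasure (eM (r i)) := fun i => eM_prob (hr i)
    set A : Set (ℝ × (Fin (m+1) → ℝ)) :=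
      {p | (p.1 < p.2 0 ∧ StrictMono p.2) ∧ t < p.1} with hA
    have hS : MeasurableSet {x : Fin (m+2) → ℝ | StrictMono x ∧ t < x 0} :=
      (measurableSet_strictMono _).inter
        (measurableSet_lt measurable_const (measurable_pi_apply 0))
    have hMP := (measurePreserving_piFinSuccAbove (fun i : Fin (m+2) => eM (r i)) 0).symm
    have hpre : (MeasurableEquiv.piFinSuccAbove (fun _ : Fin (m+2) => ℝ) 0).symm ⁻¹'
        {x : Fin (m+2) → ℝ | StrictMono x ∧ t < x 0} = A := by
      ext ⟨s, y⟩
      have he : (MeasurableEquiv.piFinSuccAbove (fun _ : Fin (m+2) => ℝ) 0).symm (s, y)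
          = Fin.cons s y := by
        simp [MeasurableEquiv.piFinSuccAbove, Fin.insertNth_zero', Fin.consEquiv]
      simp only [Set.mem_preimage, Set.mem_setOf_eq, he, strictMono_fin_cons, Fin.cons_zero, hA]
    have hstep := hMP.measure_preimage hS.nullMeasurableSet
    rw [hpre] at hstep
    rw [← hstep]
    have hsa : (fun j : Fin (m+1) => eM (r ((0 : Fin (m+2)).succAbove j)))
        = fun j : Fin (m+1) => eM (r (Fin.succ j)) := by
      funext j; rw [Fin.succAbove_zero]
    rw [hsa]
    have hAmeas : MeasurableSet A := by
      rw [← hpre]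
      exact (MeasurableEquiv.measurable _) hS
    rw [Measure.prod_apply hAmeas]
    have hinner : ∀ s : ℝ,
        (Measure.pi fun j : Fin (m+1) => eM (r (Fin.succ j))) (Prod.mk s ⁻¹' A)
          = Set.indicator (Set.Ioi t)
            (fun s => (Measure.pi fun j : Fin (m+1) => eM (r (Fin.succ j)))
              {y | StrictMono y ∧ s < y 0}) s := by
      intro s
      by_cases hts : t < s
      · rw [Set.indicator_of_mem (show s ∈ Set.Ioi t from hts)]
        congr 1
        ext y
        simp only [Set.mem_preimage, Set.mem_setOf_eq, hA, hts, and_true]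
        tauto
      · rw [Set.indicator_of_notMem (show s ∉ Set.Ioi t from hts)]
        have : Prod.mk s ⁻¹' A = ∅ := by
          ext y
          simp only [Set.mem_preimage, Set.mem_setOf_eq, hA, Set.mem_empty_iff_false, iff_false]
          tauto
        rw [this, measure_empty]
    rw [lintegral_congr hinner, lintegral_indicator measurableSet_Ioi]
    have hcong : ∀ᵐ s ∂(eM (r 0)), s ∈ Set.Ioi t →
        (Measure.pi fun j : Fin (m+1) => eM (r (Fin.succ j))) {y | StrictMono y ∧ s < y 0}
          = ENNReal.ofReal (Real.exp (-((∑ j, r (Fin.succ j)) * s))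
              * ∏ k, r (Fin.succ k) / ∑ j ∈ Finset.Ici k, r (Fin.succ j)) := by
      apply Filter.Eventually.of_forall
      intro s hs
      exact IH (fun j => r (Fin.succ j)) (fun j => hr _) s (le_trans ht (le_of_lt hs))
    rw [setLIntegral_congr_fun measurableSet_Ioi (fun s hs => IH (fun j => r (Fin.succ j)) (fun j => hr _) s (le_trans ht (le_of_lt hs)))]
    have hc : 0 ≤ ∑ j, r (Fin.succ j) :=
      Finset.sum_nonneg fun j _ => (hr _).le
    have hC : 0 ≤ ∏ k : Fin (m+1), r (Fin.succ k) / ∑ j ∈ Finset.Ici k, r (Fin.succ j) :=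
      Finset.prod_nonneg fun k _ => div_nonneg (hr _).le
        (Finset.sum_nonneg fun j _ => (hr _).le)
    rw [eM_lintegral_exp (hr 0) hc hC ht]
    congr 1
    have h0 : ∑ j ∈ Finset.Ici (0 : Fin (m+2)), r j = ∑ j, r j := by
      congr 1
      ext j
      simp [Fin.zero_le]
    have hsum : ∑ j : Fin (m+2), r j = r 0 + ∑ j : Fin (m+1), r (Fin.succ j) :=
      Fin.sum_univ_succ r
    have hprod : ∏ k : Fin (m+2), r k / ∑ j ∈ Finset.Ici k, r j
        = (r 0 / (r 0 + ∑ j : Fin (m+1), r (Fin.succ j)))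
          * ∏ k : Fin (m+1), r (Fin.succ k) / ∑ j ∈ Finset.Ici k, r (Fin.succ j) := by
      rw [Fin.prod_univ_succ]
      congr 1
      · rw [h0, hsum]
      · exact Finset.prod_congr rfl fun k _ => by rw [sum_Ici_succ]
    rw [hsum, hprod]
    ring

lemma map_eq_eM {ν : Measure ℝ} [IsProbabilityMeasure ν] {ρ : ℝ} (hρ : 0 < ρ)
    {Λ : ℝ → ℝ} (hcont : Continuous Λ) (hmono : StrictMonoOn Λ (Set.Ici 0))
    (h0 : Λ 0 = 0) (htop : Filter.Tendsto Λ Filter.atTop Filter.atTop)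
    (hneg : ν (Set.Iic 0) = 0)
    (hsurv : ∀ t, 0 ≤ t → ν (Set.Ioi t) = ENNReal.ofReal (Real.exp (-(ρ * Λ t)))) :
    ν.map Λ = eM ρ := by
  haveI h1 : IsProbabilityMeasure (ν.map Λ) :=
    Measure.isProbabilityMeasure_map hcont.measurable.aemeasurable
  haveI h2 : IsProbabilityMeasure (eM ρ) := eM_prob hρ
  have hν0 : ν (Set.Ioi 0) = 1 := by
    have := measure_compl (μ := ν) (s := Set.Iic (0:ℝ)) measurableSet_Iic (measure_ne_top _ _)
    rw [hneg, Set.compl_Iic] at this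
    simpa using this
  refine ext_of_generate_finite (Set.range Set.Ioi) ?_ isPiSystem_Ioi ?_ (by simp) 
  · rw [← borel_eq_generateFrom_Ioi ℝ]; rfl
  · rintro s ⟨a, rfl⟩
    rw [Measure.map_apply hcont.measurable measurableSet_Ioi]
    by_cases ha : 0 ≤ a
    · obtain ⟨c, hca, hc0⟩ : ∃ c, a ≤ Λ c ∧ 0 ≤ c :=
        ((htop.eventually_ge_atTop a).and (Filter.eventually_ge_atTop 0)).exists
      obtain ⟨b, hb, hba⟩ : ∃ b ∈ Set.Icc 0 c, Λ b = a := by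
        apply intermediate_value_Icc hc0 hcont.continuousOn
        rw [h0]; exact ⟨ha, hca⟩
      have hb0 : 0 ≤ b := hb.1
      have hset : Λ ⁻¹' Set.Ioi a ∩ Set.Ioi 0 = Set.Ioi b ∩ Set.Ioi 0 := by
        ext x
        simp only [Set.mem_inter_iff, Set.mem_preimage, Set.mem_Ioi]
        constructor
        · rintro ⟨hx, hx0⟩
          refine ⟨?_, hx0⟩
          rw [← hba] at hx
          exact (hmono.lt_iff_lt hb0 hx0.le).mp hx
        · rintro ⟨hx, hx0⟩
          refine ⟨?_, hx0⟩
          rw [← hba]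
          exact hmono hb0 hx0.le hx
      have hcompl : ν ((Set.Ioi (0:ℝ))ᶜ) = 0 := by rwa [Set.compl_Ioi]
      rw [← measure_inter_conull hcompl, hset, measure_inter_conull hcompl,
        hsurv b hb0, hba, eM_apply_Ioi hρ ha]
    · push_neg at ha
      have hsub : Set.Ioi (0:ℝ) ⊆ Λ ⁻¹' Set.Ioi a := by
        intro x hx
        simp only [Set.mem_preimage, Set.mem_Ioi]
        have : Λ 0 < Λ x := hmono (Set.mem_Ici.mpr le_rfl) (Set.mem_Ici.mpr (le_of_lt hx)) hx
        rw [h0] at this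
        linarith
      have hge : (1:ℝ≥0∞) ≤ ν (Λ ⁻¹' Set.Ioi a) := hν0 ▸ measure_mono hsub
      have hge' : (1:ℝ≥0∞) ≤ eM ρ (Set.Ioi a) := by
        have : eM ρ (Set.Ioi (0:ℝ)) = 1 := by
          rw [eM_apply_Ioi hρ le_rfl]; simp
        exact this ▸ measure_mono (fun x hx => lt_trans ha hx)
      rw [le_antisymm prob_le_one hge, le_antisymm prob_le_one hge']

lemma pi_map_coord {N : ℕ} (κ : Fin N → Measure ℝ) [∀ i, IsProbabilityMeasure (κ i)]
    {f : ℝ → ℝ} (hf : Measurable f) :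
    (Measure.pi κ).map (fun x i => f (x i)) = Measure.pi (fun i => (κ i).map f) := by
  haveI : ∀ i, IsProbabilityMeasure ((κ i).map f) := fun i =>
    Measure.isProbabilityMeasure_map hf.aemeasurable
  refine (Measure.pi_eq fun s hs => ?_).symm
  have hF : Measurable (fun x : Fin N → ℝ => fun i => f (x i)) :=
    measurable_pi_lambda _ fun i => hf.comp (measurable_pi_apply i)
  rw [Measure.map_apply hF (MeasurableSet.univ_pi hs)]
  have hpre : (fun x : Fin N → ℝ => fun i => f (x i)) ⁻¹' Set.pi Set.univ s
      = Set.pi Set.univ (fun i => f ⁻¹' s i) := by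
    ext x; simp [Set.mem_pi]
  rw [hpre, Measure.pi_pi]
  exact Finset.prod_congr rfl fun i _ => (Measure.map_apply hf (hs i)).symm

lemma pi_map_perm {N : ℕ} (κ : Fin N → Measure ℝ) [∀ i, IsProbabilityMeasure (κ i)]
    (σ : Equiv.Perm (Fin N)) {B : Set (Fin N → ℝ)} (hB : MeasurableSet B) :
    Measure.pi κ ((fun x (k : Fin N) => x (σ k)) ⁻¹' B) = Measure.pi (fun k => κ (σ k)) B := by
  haveI : ∀ k, IsProbabilityMeasure (κ (σ k)) := fun k => inferInstance
  have hG : Measurable (fun x : Fin N → ℝ => fun k => x (σ k)) :=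
    measurable_pi_lambda _ fun k => measurable_pi_apply (σ k)
  rw [← Measure.map_apply hG hB]
  congr 1
  refine (Measure.pi_eq fun s hs => ?_).symm
  rw [Measure.map_apply hG (MeasurableSet.univ_pi hs)]
  have hset : (fun x : Fin N → ℝ => fun k => x (σ k)) ⁻¹' Set.pi Set.univ s
      = Set.pi Set.univ (fun j => s (σ.symm j)) := by
    ext x
    simp only [Set.mem_preimage, Set.mem_pi, Set.mem_univ, true_implies]
    constructor
    · intro h j
      have := h (σ.symm j); simpa using this
    · intro h k
      have := h (σ k); simpa using this
  rw [hset, Measure.pi_pi]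
  refine (Equiv.prod_comp σ fun j => κ j (s (σ.symm j))).symm.trans ?_
  exact Finset.prod_congr rfl fun k _ => by simp

lemma joint_eq_pi {Ω : Type*} [MeasurableSpace Ω] (μ : Measure Ω) [IsProbabilityMeasure μ]
    {N : ℕ} (T : Fin N → Ω → ℝ) (hmeas : ∀ i, Measurable (T i))
    (hindep : iIndepFun T μ) :
    μ.map (fun ω => fun i => T i ω) = Measure.pi (fun i => μ.map (T i)) := by
  haveI : ∀ i, IsProbabilityMeasure (μ.map (T i)) := fun i =>
    Measure.isProbabilityMeasure_map (hmeas i).aemeasurable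
  refine (Measure.pi_eq fun s hs => ?_).symm
  have hJ : Measurable (fun ω => fun i => T i ω) := measurable_pi_lambda _ hmeas
  rw [Measure.map_apply hJ (MeasurableSet.univ_pi hs)]
  have hpre : (fun ω => fun i => T i ω) ⁻¹' Set.pi Set.univ s
      = ⋂ i ∈ Finset.univ, T i ⁻¹' s i := by
    ext ω; simp [Set.mem_pi]
  rw [hpre, hindep.measure_inter_preimage_eq_mul Finset.univ (fun i _ => hs i)]
  exact Finset.prod_congr rfl fun i _ => (Measure.map_apply (hmeas i) (hs i)).symm

/-- Kalbfleisch–Prentice, uncensored case: under the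
proportional-hazards model, the probability that the failure times occur
in the order given by a permutation `σ` is the Cox partial likelihood
`∏ k, ρ (σ k) / ∑_{j ≥ k} ρ (σ j)`, independent of the baseline
cumulative hazard `Λ₀`. -/
theorem rank_prob_eq_partial_likelihood
    {Ω : Type*} [MeasurableSpace Ω] (μ : Measure Ω) [IsProbabilityMeasure μ]
    (n : ℕ) (T : Fin n → Ω → ℝ) (ρ : Fin n → ℝ) (Λ₀ : ℝ → ℝ)
    (hρ : ∀ i, 0 < ρ i)
    (hΛcont : Continuous Λ₀) (hΛmono : StrictMonoOn Λ₀ (Set.Ici 0))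
    (hΛ0 : Λ₀ 0 = 0) (hΛtop : Filter.Tendsto Λ₀ Filter.atTop Filter.atTop)
    (hmeas : ∀ i, Measurable (T i))
    (hpos : ∀ i, ∀ ω, 0 < T i ω)
    (hindep : iIndepFun T μ)
    (hsurv : ∀ i, ∀ t, 0 ≤ t →
      μ {ω | t < T i ω} = ENNReal.ofReal (Real.exp (-(ρ i * Λ₀ t))))
    (σ : Equiv.Perm (Fin n)) :
    μ {ω | StrictMono fun k => T (σ k) ω} =
      ∏ k : Fin n,
        ENNReal.ofReal (ρ (σ k) / ∑ j ∈ Finset.Ici k, ρ (σ j)) := by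
  cases n with
  | zero =>
    have huniv : {ω | StrictMono fun k => T (σ k) ω} = Set.univ := by
      ext ω
      simp only [Set.mem_setOf_eq, Set.mem_univ, iff_true]
      intro a
      exact a.elim0
    rw [huniv]
    simp
  | succ m =>
    -- laws
    set ν : Fin (m+1) → Measure ℝ := fun i => μ.map (T i) with hν
    haveI hνprob : ∀ i, IsProbabilityMeasure (ν i) := fun i =>
      Measure.isProbabilityMeasure_map (hmeas i).aemeasurable
    have hνIoi : ∀ i, ∀ t : ℝ, 0 ≤ t →
        ν i (Set.Ioi t) = ENNReal.ofReal (Real.exp (-(ρ i * Λ₀ t))) := by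
      intro i t ht
      rw [hν, Measure.map_apply (hmeas i) measurableSet_Ioi]
      have : T i ⁻¹' Set.Ioi t = {ω | t < T i ω} := by
        ext ω; simp
      rw [this]
      exact hsurv i t ht
    have hνneg : ∀ i, ν i (Set.Iic 0) = 0 := by
      intro i
      rw [hν, Measure.map_apply (hmeas i) measurableSet_Iic]
      have : T i ⁻¹' Set.Iic 0 = ∅ := by
        ext ω
        simp only [Set.mem_preimage, Set.mem_Iic, Set.mem_empty_iff_false, iff_false, not_le]
        exact hpos i ω
      rw [this, measure_empty]
    have hmap : ∀ i, (ν i).map Λ₀ = eM (ρ i) := fun i =>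
      map_eq_eM (hρ i) hΛcont hΛmono hΛ0 hΛtop (hνneg i) (hνIoi i)
    -- reduction to pi measure
    have hSM : MeasurableSet {x : Fin (m+1) → ℝ | StrictMono x} := measurableSet_strictMono (m+1)
    have hG : Measurable (fun x : Fin (m+1) → ℝ => fun k => x (σ k)) :=
      measurable_pi_lambda _ fun k => measurable_pi_apply (σ k)
    have hJ : Measurable (fun ω => fun i => T i ω) := measurable_pi_lambda _ hmeas
    have hGpre : MeasurableSet ((fun x : Fin (m+1) → ℝ => fun k => x (σ k)) ⁻¹' {x | StrictMono x}) :=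
      hG hSM
    have hev : {ω | StrictMono fun k => T (σ k) ω}
        = (fun ω => fun i => T i ω) ⁻¹' ((fun x : Fin (m+1) → ℝ => fun k => x (σ k)) ⁻¹' {x | StrictMono x}) := rfl
    rw [hev, ← Measure.map_apply hJ hGpre, joint_eq_pi μ T hmeas hindep, ← hν,
      pi_map_perm ν σ hSM]
    set κ : Fin (m+1) → Measure ℝ := fun k => ν (σ k) with hκ
    haveI : ∀ k, IsProbabilityMeasure (κ k) := fun k => hνprob (σ k)
    -- positivity full set
    set pos : Set (Fin (m+1) → ℝ) := Set.pi Set.univ (fun _ => Set.Ioi (0:ℝ)) with hposdef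
    have hposmeas : MeasurableSet pos := MeasurableSet.univ_pi fun _ => measurableSet_Ioi
    have hκIoi0 : ∀ k, κ k (Set.Ioi (0:ℝ)) = 1 := by
      intro k
      rw [hκ, hνIoi (σ k) 0 le_rfl, hΛ0]
      simp
    have hposfull : Measure.pi κ pos = 1 := by
      rw [hposdef, Measure.pi_pi]
      simp [hκIoi0]
    have hposnull : Measure.pi κ posᶜ = 0 := by
      rw [measure_compl hposmeas (measure_ne_top _ _), hposfull, measure_univ, tsub_self]
    -- transfer along Λ₀
    set Φ : (Fin (m+1) → ℝ) → (Fin (m+1) → ℝ) := fun x i => Λ₀ (x i) with hΦ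
    have hseteq : {x : Fin (m+1) → ℝ | StrictMono x} ∩ pos = (Φ ⁻¹' {x | StrictMono x}) ∩ pos := by
      ext x
      simp only [Set.mem_inter_iff, Set.mem_setOf_eq, Set.mem_preimage, hΦ, hposdef,
        Set.mem_pi, Set.mem_univ, true_implies, Set.mem_Ioi]
      constructor
      · rintro ⟨hsm, hx⟩
        refine ⟨fun i j hij => hΛmono (hx i).le (hx j).le (hsm hij), hx⟩
      · rintro ⟨hsm, hx⟩
        refine ⟨fun i j hij => ?_, hx⟩
        by_contra hle
        push_neg at hle
        have := hΛmono.monotoneOn (hx j).le (hx i).le hle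
        exact absurd (hsm hij) (not_lt.mpr this)
    have step1 : Measure.pi κ {x : Fin (m+1) → ℝ | StrictMono x}
        = Measure.pi κ (Φ ⁻¹' {x | StrictMono x}) := by
      rw [← measure_inter_conull (μ := Measure.pi κ) (s := {x : Fin (m+1) → ℝ | StrictMono x}) hposnull,
        hseteq, measure_inter_conull hposnull]
    have hΦmeas : Measurable Φ := measurable_pi_lambda _ fun i =>
      hΛcont.measurable.comp (measurable_pi_apply i)
    have step2 : Measure.pi κ (Φ ⁻¹' {x | StrictMono x})
        = Measure.pi (fun k => eM (ρ (σ k))) {x : Fin (m+1) → ℝ | StrictMono x} := by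
      rw [← Measure.map_apply hΦmeas hSM, hΦ, pi_map_coord κ hΛcont.measurable]
      have hfe : (fun i => (κ i).map Λ₀) = fun k => eM (ρ (σ k)) := by
        funext k
        rw [hκ, hmap (σ k)]
      rw [hfe]
    rw [step1, step2]
    -- restrict to x 0 > 0 and apply key lemma
    haveI : ∀ k, IsProbabilityMeasure (eM (ρ (σ k))) := fun k => eM_prob (hρ (σ k))
    have hposfull' : Measure.pi (fun k : Fin (m+1) => eM (ρ (σ k))) posᶜ = 0 := by
      have h1 : Measure.pi (fun k : Fin (m+1) => eM (ρ (σ k))) pos = 1 := by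
        rw [hposdef, Measure.pi_pi]
        have : ∀ k : Fin (m+1), eM (ρ (σ k)) (Set.Ioi (0:ℝ)) = 1 := by
          intro k
          rw [eM_apply_Ioi (hρ (σ k)) le_rfl]
          simp
        simp [this]
      rw [measure_compl hposmeas (measure_ne_top _ _), h1, measure_univ, tsub_self]
    have hkeyset : {x : Fin (m+1) → ℝ | StrictMono x} ∩ pos
        = {x : Fin (m+1) → ℝ | StrictMono x ∧ 0 < x 0} ∩ pos := by
      ext x
      simp only [Set.mem_inter_iff, Set.mem_setOf_eq, hposdef, Set.mem_pi, Set.mem_univ,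
        true_implies, Set.mem_Ioi]
      constructor
      · rintro ⟨hsm, hx⟩; exact ⟨⟨hsm, hx 0⟩, hx⟩
      · rintro ⟨⟨hsm, -⟩, hx⟩; exact ⟨hsm, hx⟩
    have step3 : Measure.pi (fun k : Fin (m+1) => eM (ρ (σ k))) {x : Fin (m+1) → ℝ | StrictMono x}
        = Measure.pi (fun k : Fin (m+1) => eM (ρ (σ k))) {x | StrictMono x ∧ 0 < x 0} := by
      rw [← measure_inter_conull (μ := Measure.pi fun k : Fin (m+1) => eM (ρ (σ k)))
          (s := {x : Fin (m+1) → ℝ | StrictMono x}) hposfull',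
        hkeyset, measure_inter_conull hposfull']
    rw [step3, key_lemma m (fun k => ρ (σ k)) (fun k => hρ (σ k)) 0 le_rfl]
    rw [mul_zero, neg_zero, Real.exp_zero, one_mul]
    exact ENNReal.ofReal_prod_of_nonneg fun k _ =>
      div_nonneg (hρ (σ k)).le (Finset.sum_nonneg fun j _ => (hρ (σ j)).le)
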